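/- Let Z be a measurable space, Θ an arbitrary set, ℓ : Z × Θ → ℝ, c > 0, and define the population utility u(z, θ) := c · ℓ(z, θ). Let S be a set of probability measures on Z (the feasible induced data distributions) such that ℓ(·, θ) is integrable with respect to every D ∈ S for every θ ∈ Θ. Suppose (D*, θ*) with D* ∈ S and θ* ∈ Θ is a performatively stable point: (i) ∫ ℓ(z, θ*) dD*(z) ≤ ∫ ℓ(z, θ) dD*(z) for all θ ∈ Θ (the learner best-responds to D*), and (ii) ∫ u(z, θ*) dD(z) ≤ ∫ u(z, θ*) dD*(z) for all D ∈ S (the population best-responds to θ*). For each D ∈ S let θ_D ∈ Θ satisfy ∫ ℓ(z, θ_D) dD(z) ≤ ∫ ℓ(z, θ) dD(z) for all θ ∈ Θ. Then for every D ∈ S, ∫ u(z, θ_D) dD(z) ≤ ∫ u(z, θ*) dD*(z); that is, the benefit of coordination is zero: no collective strategy achieves a higher population utility at the induced risk minimizer than the selfish equilibrium. -/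
import Mathlib


open MeasureTheory

/-- **Proposition 4.2, adversarial case (`u = c·ℓ`, `c > 0`): the benefit of coordination is
zero.** If the population utility is a positive multiple of the learner's loss, then at a
performatively stable point `(D*, θ*)` no feasible induced distribution `D ∈ S` achieves a
higher population utility at the induced risk minimizer `θ_D` than the selfish equilibrium. -/
theorem zero_benefit_of_coordination_zero_sum
    {Z : Type*} [MeasurableSpace Z] {Θ : Type*}
    (ℓ : Z → Θ → ℝ) (c : ℝ) (hc : 0 < c)
    (u : Z → Θ → ℝ) (hu : ∀ z θ, u z θ = c * ℓ z θ)
    -- the set of feasible induced data distributions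
    (S : Set (Measure Z)) (hSprob : ∀ D ∈ S, IsProbabilityMeasure D)
    (hint : ∀ D ∈ S, ∀ θ : Θ, Integrable (fun z => ℓ z θ) D)
    -- a performatively stable point `(D*, θ*)`
    (Dstar : Measure Z) (hDstar : Dstar ∈ S) (θstar : Θ)
    -- (i) the learner best-responds to `D*`
    (hlearner : ∀ θ : Θ, ∫ z, ℓ z θstar ∂Dstar ≤ ∫ z, ℓ z θ ∂Dstar)
    -- (ii) the population best-responds to `θ*`
    (hpop : ∀ D ∈ S, ∫ z, u z θstar ∂D ≤ ∫ z, u z θstar ∂Dstar)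
    -- for each `D ∈ S`, `θbr D` is a risk minimizer of the learner's expected loss over `D`
    (θbr : Measure Z → Θ)
    (hθbr : ∀ D ∈ S, ∀ θ : Θ, ∫ z, ℓ z (θbr D) ∂D ≤ ∫ z, ℓ z θ ∂D) :
    ∀ D ∈ S, ∫ z, u z (θbr D) ∂D ≤ ∫ z, u z θstar ∂Dstar := by
  intro D hD
  calc ∫ z, u z (θbr D) ∂D = c * ∫ z, ℓ z (θbr D) ∂D := by
        simp only [hu]; rw [integral_const_mul]
    _ ≤ c * ∫ z, ℓ z θstar ∂D := by
        exact mul_le_mul_of_nonneg_left (hθbr D hD θstar) hc.le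
    _ = ∫ z, u z θstar ∂D := by simp only [hu]; rw [integral_const_mul]
    _ ≤ ∫ z, u z θstar ∂Dstar := hpop D hD
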